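/- arXiv:2407.15245 — 3 statements merged into one kernel-verified Lean document; each statement's English description precedes it below -/
import Mathlib

section
/- For λ > 0, t > t₀, and x, y ∈ ℝ, the value (1/(2π)) · (1/cosh(√λ(t−t₀))) · exp(−(√λ(x+y)²/4)·tanh(√λ(t−t₀))) · ∫_ℝ exp(−(ξ²/√λ)·tanh(√λ(t−t₀)) + i(x−y)ξ) dξ equals λ^{1/4}/√(2π sinh(2√λ(t−t₀))) · exp(−(√λ/2)(x²+y²)·cosh(2√λ(t−t₀))/sinh(2√λ(t−t₀)) + √λ·x·y/sinh(2√λ(t−t₀))). -/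
open Complex Real MeasureTheory

theorem mehler_univariate_factor (lam t₀ t x y : ℝ) (hlam : 0 < lam) (ht : t₀ < t) :
    ((1 / (2 * Real.pi) : ℝ) : ℂ) *
      ((1 / Real.cosh (Real.sqrt lam * (t - t₀)) : ℝ) : ℂ) *
      Complex.exp (-((Real.sqrt lam * (x + y)^2 / 4 * Real.tanh (Real.sqrt lam * (t - t₀)) : ℝ) : ℂ)) *
      (∫ ξ : ℝ, Complex.exp (-((ξ^2 / Real.sqrt lam * Real.tanh (Real.sqrt lam * (t - t₀)) : ℝ) : ℂ)
          + Complex.I * ((x - y : ℝ) : ℂ) * (ξ : ℂ))) =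
    ((lam ^ ((1:ℝ)/4) / Real.sqrt (2 * Real.pi * Real.sinh (2 * Real.sqrt lam * (t - t₀))) : ℝ) : ℂ) *
      Complex.exp
        (((-(Real.sqrt lam / 2) * (x^2 + y^2) *
            (Real.cosh (2 * Real.sqrt lam * (t - t₀)) / Real.sinh (2 * Real.sqrt lam * (t - t₀)))
          + Real.sqrt lam * x * y / Real.sinh (2 * Real.sqrt lam * (t - t₀)) : ℝ) : ℂ)) := by
  have h2s : 2 * Real.sqrt lam * (t - t₀) = 2 * (Real.sqrt lam * (t - t₀)) := by ring
  rw [h2s]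
  set s := Real.sqrt lam * (t - t₀) with hs
  have hsqrt : 0 < Real.sqrt lam := Real.sqrt_pos.mpr hlam
  have hs0 : 0 < s := mul_pos hsqrt (by linarith)
  have hsh : 0 < Real.sinh s := Real.sinh_pos_iff.mpr hs0
  have hch : 0 < Real.cosh s := Real.cosh_pos s
  have hth : Real.tanh s = Real.sinh s / Real.cosh s := Real.tanh_eq_sinh_div_cosh s
  have hthpos : 0 < Real.tanh s := by rw [hth]; positivity
  set a : ℝ := Real.tanh s / Real.sqrt lam with ha
  have hapos : 0 < a := by positivity
  -- evaluate the Gaussian integral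
  have hb : ((-(a : ℂ))).re < 0 := by simpa using hapos
  have key : (∫ ξ : ℝ, Complex.exp (-((ξ^2 / Real.sqrt lam * Real.tanh s : ℝ) : ℂ)
          + Complex.I * ((x - y : ℝ) : ℂ) * (ξ : ℂ))) =
      ((Real.sqrt (Real.pi / a) : ℝ) : ℂ) *
        Complex.exp (((-( (x - y)^2 / (4 * a)) : ℝ) : ℂ)) := by
    have h1 : ∀ ξ : ℝ, (-((ξ^2 / Real.sqrt lam * Real.tanh s : ℝ) : ℂ)
          + Complex.I * ((x - y : ℝ) : ℂ) * (ξ : ℂ)) =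
        (-(a : ℂ)) * (ξ : ℂ)^2 + (Complex.I * ((x - y : ℝ) : ℂ)) * (ξ : ℂ) + 0 := by
      intro ξ
      have : (a : ℂ) = ((Real.tanh s : ℝ) : ℂ) / ((Real.sqrt lam : ℝ) : ℂ) := by
        rw [ha]; push_cast; ring
      rw [this]
      have hlC : ((Real.sqrt lam : ℝ) : ℂ) ≠ 0 := by
        exact_mod_cast hsqrt.ne'
      field_simp
      push_cast
      ring_nf; simp [hlC]
    simp_rw [h1]
    rw [integral_cexp_quadratic hb]
    congr 1
    · rw [neg_neg]
      have hpa : (0:ℝ) ≤ Real.pi / a := by positivity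
      rw [Real.sqrt_eq_rpow, Complex.ofReal_cpow hpa]
      push_cast
      norm_num
    · congr 1
      have haC : (a : ℂ) ≠ 0 := by exact_mod_cast hapos.ne'
      field_simp
      push_cast
      ring_nf
      rw [Complex.I_sq]
      ring_nf; simp [haC]
  rw [key]
  rw [← Complex.ofReal_neg, ← Complex.ofReal_exp, ← Complex.ofReal_exp, ← Complex.ofReal_exp,
    ← Complex.ofReal_mul, ← Complex.ofReal_mul, ← Complex.ofReal_mul, ← Complex.ofReal_mul, ← Complex.ofReal_mul,
    Complex.ofReal_inj]
  -- now a real identity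
  have hsh2 : Real.sinh (2 * s) = 2 * Real.sinh s * Real.cosh s := Real.sinh_two_mul s
  have hch2 : Real.cosh (2 * s) = Real.cosh s ^ 2 + Real.sinh s ^ 2 := Real.cosh_two_mul s
  have hsh2pos : 0 < Real.sinh (2 * s) := by rw [hsh2]; positivity
  have hquart : lam ^ ((1:ℝ)/4) = Real.sqrt (Real.sqrt lam) := by
    rw [Real.sqrt_eq_rpow, Real.sqrt_eq_rpow, ← Real.rpow_mul hlam.le]
    norm_num
  -- split into coefficient and exponent
  have hcoeff : 1 / (2 * Real.pi) * (1 / Real.cosh s) * Real.sqrt (Real.pi / a) =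
      lam ^ ((1:ℝ)/4) / Real.sqrt (2 * Real.pi * Real.sinh (2 * s)) := by
    have hL : 0 ≤ 1 / (2 * Real.pi) * (1 / Real.cosh s) * Real.sqrt (Real.pi / a) := by
      positivity
    have hR : 0 ≤ lam ^ ((1:ℝ)/4) / Real.sqrt (2 * Real.pi * Real.sinh (2 * s)) := by
      positivity
    have hsq : (1 / (2 * Real.pi) * (1 / Real.cosh s) * Real.sqrt (Real.pi / a))^2 =
        (lam ^ ((1:ℝ)/4) / Real.sqrt (2 * Real.pi * Real.sinh (2 * s)))^2 := by
      have e1 : (Real.sqrt (Real.pi / a))^2 = Real.pi / a := Real.sq_sqrt (by positivity)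
      have e2 : (Real.sqrt (2 * Real.pi * Real.sinh (2 * s)))^2
          = 2 * Real.pi * Real.sinh (2 * s) := Real.sq_sqrt (by positivity)
      have e3 : (lam ^ ((1:ℝ)/4))^2 = Real.sqrt lam := by
        rw [hquart, Real.sq_sqrt (Real.sqrt_nonneg _)]
      simp only [mul_pow, div_pow, one_pow]
      rw [e1, e2, e3, ha, hth, hsh2]
      have hpi := Real.pi_pos
      field_simp
    nlinarith [hsq, hL, hR, sq_nonneg (1 / (2 * Real.pi) * (1 / Real.cosh s) * Real.sqrt (Real.pi / a) - lam ^ ((1:ℝ)/4) / Real.sqrt (2 * Real.pi * Real.sinh (2 * s)))]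
  have hexp : -(Real.sqrt lam * (x + y)^2 / 4 * Real.tanh s) + -((x - y)^2 / (4 * a)) =
      -(Real.sqrt lam / 2) * (x^2 + y^2) * (Real.cosh (2*s) / Real.sinh (2*s))
        + Real.sqrt lam * x * y / Real.sinh (2*s) := by
    have hc2 : Real.cosh s ^ 2 = Real.sinh s ^ 2 + 1 := Real.cosh_sq s
    rw [hsh2, hch2, ha, hth]
    set sl := Real.sqrt lam
    set sh := Real.sinh s
    set ch := Real.cosh s
    have e1 : -(sl * (x + y)^2 / 4 * (sh / ch)) + -((x - y)^2 / (4 * (sh / ch / sl)))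
        = (-(sl * (x+y)^2 * sh^2) - sl * (x-y)^2 * ch^2) / (4 * sh * ch) := by
      field_simp
      ring
    have e2 : -(sl / 2) * (x^2 + y^2) * ((ch ^ 2 + sh ^ 2) / (2 * sh * ch))
          + sl * x * y / (2 * sh * ch)
        = (-(sl * (x^2+y^2) * (ch^2 + sh^2)) + 2 * sl * x * y) / (4 * sh * ch) := by
      field_simp
      ring
    rw [e1, e2]
    congr 1
    linear_combination (2 * sl * x * y) * hc2
  calc 1 / (2 * Real.pi) * (1 / Real.cosh s) *
        Real.exp (-(Real.sqrt lam * (x + y)^2 / 4 * Real.tanh s)) *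
        (Real.sqrt (Real.pi / a) * Real.exp (-((x - y)^2 / (4 * a))))
      = (1 / (2 * Real.pi) * (1 / Real.cosh s) * Real.sqrt (Real.pi / a)) *
        Real.exp (-(Real.sqrt lam * (x + y)^2 / 4 * Real.tanh s) + -((x - y)^2 / (4 * a))) := by
        rw [Real.exp_add]; try ring
    _ = _ := by rw [hcoeff, hexp]
end

section
/- Suppose g(t, q₁, …, qₙ) = α(t)·exp(−Σ_{k=1}^n β_k(t) q_k) with α, β_k differentiable, α > 0. Then g satisfies the PDE ∂g/∂t = −(Σ q_k) g + Σ_k (λ_k q_k ∂²g/∂q_k² + λ_k ∂g/∂q_k) for all (q₁,…,qₙ) ∈ ℝⁿ if and only if for all k, β_k' = 1 − λ_k β_k², and α'/α = −Σ_k λ_k β_k. -/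
open Real

/-- Partial derivative of a function of (q₁,…,qₙ) in the k-th variable. -/
noncomputable def pderivQ {n : ℕ} (k : Fin n) (f : (Fin n → ℝ) → ℝ) (q : Fin n → ℝ) : ℝ :=
  fderiv ℝ f q (Pi.single k 1)

lemma pderiv_aexp {n : ℕ} (a : ℝ) (c : Fin n → ℝ) (k : Fin n) (q : Fin n → ℝ) :
    pderivQ k (fun v => a * Real.exp (-∑ j, c j * v j)) q
      = -(c k) * (a * Real.exp (-∑ j, c j * q j)) := by
  set L : (Fin n → ℝ) →L[ℝ] ℝ :=
    ∑ j, c j • (ContinuousLinearMap.proj j : (Fin n → ℝ) →L[ℝ] ℝ) with hLdef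
  have hLapp : ∀ v : Fin n → ℝ, L v = ∑ j, c j * v j := by
    intro v
    simp [hLdef, ContinuousLinearMap.sum_apply]
  have hL : HasFDerivAt (fun v : Fin n → ℝ => ∑ j, c j * v j) L q := by
    have hfun : (fun v : Fin n → ℝ => ∑ j, c j * v j) = ⇑L := by
      funext v; rw [hLapp]
    rw [hfun]; exact L.hasFDerivAt
  have h1 : HasFDerivAt (fun v : Fin n → ℝ => a * Real.exp (-∑ j, c j * v j))
      ((a * Real.exp (-∑ j, c j * q j)) • (-L)) q := by
    have h3 := ((hL.neg).exp).const_mul a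
    refine h3.congr_fderiv ?_
    rw [mul_smul]
    rfl
  have hfd := h1.fderiv
  have hsingle : L (Pi.single k 1) = c k := by
    rw [hLapp]
    simp [Pi.single_apply, mul_ite, Finset.sum_ite_eq']
  simp only [pderivQ, hfd, ContinuousLinearMap.smul_apply, ContinuousLinearMap.neg_apply,
    hsingle, smul_eq_mul]
  ring

lemma sum_comb_aux {n : ℕ} (a : ℝ) (f g h : Fin n → ℝ) :
    (a - ∑ k, f k) - (-(∑ k, g k) + ∑ k, h k) = a + ∑ k, (g k - f k - h k) := by
  rw [Finset.sum_sub_distrib, Finset.sum_sub_distrib]; ring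

theorem separable_ansatz_characterization (n : ℕ) (lam : Fin n → ℝ)
    (hlam : ∀ k, 0 ≤ lam k)
    (α : ℝ → ℝ) (β : Fin n → ℝ → ℝ)
    (hα : Differentiable ℝ α) (hβ : ∀ k, Differentiable ℝ (β k))
    (hαpos : ∀ t, 0 < α t)
    (g : ℝ → (Fin n → ℝ) → ℝ)
    (hg : ∀ t q, g t q = α t * Real.exp (-∑ k, β k t * q k)) :
    (∀ (t : ℝ) (q : Fin n → ℝ),
      deriv (fun s => g s q) t =
        -(∑ k, q k) * g t q +
          ∑ k, (lam k * q k * pderivQ k (pderivQ k (g t)) q + lam k * pderivQ k (g t) q)) ↔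
    ((∀ k t, deriv (β k) t = 1 - lam k * (β k t)^2) ∧
      (∀ t, deriv α t / α t = -∑ k, lam k * β k t)) := by
  -- abbreviations
  set E : ℝ → (Fin n → ℝ) → ℝ := fun t q => Real.exp (-∑ k, β k t * q k) with hE
  have hEpos : ∀ t q, 0 < E t q := fun t q => Real.exp_pos _
  have hgt : ∀ t, g t = fun q => α t * Real.exp (-∑ k, β k t * q k) := by
    intro t; funext q; exact hg t q
  -- first partial derivative
  have hp1 : ∀ t (k : Fin n) q, pderivQ k (g t) q = -(β k t) * (α t * E t q) := by
    intro t k q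
    rw [hgt t]
    exact pderiv_aexp (α t) (fun k => β k t) k q
  -- second partial derivative
  have hp2 : ∀ t (k : Fin n) q,
      pderivQ k (pderivQ k (g t)) q = -(β k t) * (-(β k t) * α t * E t q) := by
    intro t k q
    have hfun : pderivQ k (g t) = fun v => (-(β k t) * α t) * Real.exp (-∑ j, β j t * v j) := by
      funext v
      rw [hp1 t k v]
      simp only [hE]
      ring
    rw [hfun]
    have := pderiv_aexp (-(β k t) * α t) (fun j => β j t) k q
    rw [this]
  -- time derivative
  have hdt : ∀ t q, deriv (fun s => g s q) t
      = deriv α t * E t q - α t * (∑ k, deriv (β k) t * q k) * E t q := by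
    intro t q
    have hfun : (fun s => g s q) = fun s => α s * Real.exp (-∑ k, β k s * q k) := by
      funext s; exact hg s q
    rw [hfun]
    have hs : HasDerivAt (fun s => ∑ k, β k s * q k) (∑ k, deriv (β k) t * q k) t :=
      HasDerivAt.fun_sum fun k _ => ((hβ k t).hasDerivAt.mul_const (q k))
    have h : HasDerivAt (fun s => α s * Real.exp (-∑ k, β k s * q k))
        (deriv α t * Real.exp (-∑ k, β k t * q k)
          + α t * (Real.exp (-∑ k, β k t * q k) * -∑ k, deriv (β k) t * q k)) t :=
      ((hα t).hasDerivAt).mul ((hs.neg).exp)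
    rw [h.deriv]
    simp only [hE]
    ring
  -- the key pointwise equivalence
  have key : ∀ t q,
      (deriv (fun s => g s q) t =
        -(∑ k, q k) * g t q +
          ∑ k, (lam k * q k * pderivQ k (pderivQ k (g t)) q + lam k * pderivQ k (g t) q))
      ↔ ((deriv α t + α t * ∑ k, lam k * β k t)
          + ∑ k, α t * (1 - lam k * (β k t)^2 - deriv (β k) t) * q k = 0) := by
    intro t q
    rw [hdt t q, hg t q]
    simp only [hp2, hp1]
    have hEne : E t q ≠ 0 := (hEpos t q).ne'
    -- factor out E t q on both sides
    have hL : deriv α t * E t q - α t * (∑ k, deriv (β k) t * q k) * E t q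
        = (deriv α t - α t * (∑ k, deriv (β k) t * q k)) * E t q := by ring
    have hR : -(∑ k, q k) * (α t * Real.exp (-∑ k, β k t * q k)) +
          ∑ k, (lam k * q k * (-(β k t) * (-(β k t) * α t * E t q))
            + lam k * (-(β k t) * (α t * E t q)))
        = (-(∑ k, q k) * α t
            + ∑ k, (lam k * q k * ((β k t)^2 * α t) - lam k * (β k t * α t))) * E t q := by
      rw [add_mul, Finset.sum_mul]
      have : ∀ k : Fin n, lam k * q k * (-(β k t) * (-(β k t) * α t * E t q))
            + lam k * (-(β k t) * (α t * E t q))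
          = (lam k * q k * ((β k t)^2 * α t) - lam k * (β k t * α t)) * E t q := by
        intro k; ring
      rw [Finset.sum_congr rfl (fun k _ => this k)]
      simp only [hE]
      ring
    rw [hL, hR]
    constructor
    · intro h
      have h2 := mul_right_cancel₀ hEne h
      have h3 : (deriv α t - α t * (∑ k, deriv (β k) t * q k))
          - (-(∑ k, q k) * α t
            + ∑ k, (lam k * q k * ((β k t)^2 * α t) - lam k * (β k t * α t))) = 0 := by
        rw [h2]; ring
      have h4 := sum_comb_aux (deriv α t) (fun k => α t * (deriv (β k) t * q k))
        (fun k => q k * α t)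
        (fun k => lam k * q k * ((β k t)^2 * α t) - lam k * (β k t * α t))
      rw [show α t * (∑ k, deriv (β k) t * q k) = ∑ k, α t * (deriv (β k) t * q k) from
        Finset.mul_sum _ _ _,
        show -(∑ k, q k) * α t = -(∑ k, q k * α t) by rw [neg_mul, Finset.sum_mul]] at h3
      rw [h4] at h3
      rw [show (deriv α t + α t * ∑ k, lam k * β k t)
          + ∑ k, α t * (1 - lam k * (β k t)^2 - deriv (β k) t) * q k
        = deriv α t + ∑ k, (α t * (lam k * β k t)
            + α t * (1 - lam k * (β k t)^2 - deriv (β k) t) * q k) by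
        rw [Finset.sum_add_distrib, Finset.mul_sum]; ring]
      rw [show (deriv α t : ℝ) + ∑ k, (α t * (lam k * β k t)
            + α t * (1 - lam k * (β k t)^2 - deriv (β k) t) * q k)
        = deriv α t + ∑ k, (q k * α t - α t * (deriv (β k) t * q k)
            - (lam k * q k * ((β k t)^2 * α t) - lam k * (β k t * α t))) from by
        congr 1
        exact Finset.sum_congr rfl (fun k _ => by ring)]
      exact h3
    · intro h
      congr 1
      have h3 : (deriv α t - α t * (∑ k, deriv (β k) t * q k))
          - (-(∑ k, q k) * α t
            + ∑ k, (lam k * q k * ((β k t)^2 * α t) - lam k * (β k t * α t))) = 0 := by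
        have h4 := sum_comb_aux (deriv α t) (fun k => α t * (deriv (β k) t * q k))
          (fun k => q k * α t)
          (fun k => lam k * q k * ((β k t)^2 * α t) - lam k * (β k t * α t))
        rw [show α t * (∑ k, deriv (β k) t * q k) = ∑ k, α t * (deriv (β k) t * q k) from
          Finset.mul_sum _ _ _,
          show -(∑ k, q k) * α t = -(∑ k, q k * α t) by rw [neg_mul, Finset.sum_mul]]
        rw [h4]
        rw [show ((deriv α t + α t * ∑ k, lam k * β k t)
            + ∑ k, α t * (1 - lam k * (β k t)^2 - deriv (β k) t) * q k : ℝ)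
          = deriv α t + ∑ k, (q k * α t - α t * (deriv (β k) t * q k)
            - (lam k * q k * ((β k t)^2 * α t) - lam k * (β k t * α t))) from by
          rw [Finset.mul_sum, add_assoc, ← Finset.sum_add_distrib]
          congr 1
          exact Finset.sum_congr rfl (fun k _ => by ring)] at h
        exact h
      linarith
  constructor
  · intro hpde
    have hq : ∀ (t : ℝ) (q : Fin n → ℝ), (deriv α t + α t * ∑ k, lam k * β k t)
        + ∑ k, α t * (1 - lam k * (β k t)^2 - deriv (β k) t) * q k = 0 := by
      intro t q; exact (key t q).1 (hpde t q)
    have hc0 : ∀ t, deriv α t + α t * ∑ k, lam k * β k t = 0 := by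
      intro t
      have := hq t 0
      simpa using this
    constructor
    · intro k t
      have h1 := hq t (Pi.single k 1)
      have h2 : ∑ j, α t * (1 - lam j * (β j t)^2 - deriv (β j) t) * (Pi.single k 1 : Fin n → ℝ) j
          = α t * (1 - lam k * (β k t)^2 - deriv (β k) t) := by
        simp [Pi.single_apply, mul_ite, Finset.sum_ite_eq']
      rw [h2, hc0 t, zero_add] at h1
      have hαne : α t ≠ 0 := (hαpos t).ne'
      have h3 : (1 - lam k * (β k t)^2 - deriv (β k) t) = 0 := by
        rcases mul_eq_zero.1 h1 with h | h
        · exact absurd h hαne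
        · exact h
      linarith
    · intro t
      have hαne : α t ≠ 0 := (hαpos t).ne'
      rw [div_eq_iff hαne]
      linear_combination hc0 t
  · rintro ⟨hb, ha⟩ t q
    rw [key t q]
    have hαne : α t ≠ 0 := (hαpos t).ne'
    have h1 : deriv α t = -(∑ k, lam k * β k t) * α t := (div_eq_iff hαne).1 (ha t)
    have h2 : ∀ k : Fin n, α t * (1 - lam k * (β k t)^2 - deriv (β k) t) * q k = 0 := by
      intro k
      rw [hb k t]
      ring
    rw [Finset.sum_congr rfl (fun k _ => h2 k), Finset.sum_const, smul_zero, add_zero, h1]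
    ring
end

section
/- As τ → 0⁺, the one-dimensional Mehler kernel κ_τ(x,y) = λ^{1/4}/√(2π sinh(2√λ τ)) · exp(−(√λ/2)(x²+y²) coth(2√λ τ) + √λ x y / sinh(2√λ τ)) satisfies: for every continuous bounded f : ℝ → ℝ and x ∈ ℝ, ∫_ℝ κ_τ(x,y) f(y) dy → f(x). -/
open Real MeasureTheory Filter

/-- The one-dimensional Mehler kernel at elapsed time τ. -/
noncomputable def mehlerKernelτ (lam τ x y : ℝ) : ℝ :=
  lam ^ ((1:ℝ)/4) / Real.sqrt (2 * Real.pi * Real.sinh (2 * Real.sqrt lam * τ)) *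
    Real.exp (-(Real.sqrt lam / 2) * (x^2 + y^2) *
        (Real.cosh (2 * Real.sqrt lam * τ) / Real.sinh (2 * Real.sqrt lam * τ))
      + Real.sqrt lam * x * y / Real.sinh (2 * Real.sqrt lam * τ))

/-- Algebraic identity for the Mehler exponent (completing the square). -/
lemma mehler_exp_ident (r S C x y : ℝ) (hS : 0 < S) (hC : 0 < C)
    (hid : C ^ 2 - S ^ 2 = 1) :
    -(r / 2) * (x ^ 2 + y ^ 2) * (C / S) + r * x * y / S
      = -(r * S * x ^ 2 / (2 * C)) + -(1/2) * ((y - x / C) ^ 2 / (S / (r * C))) := by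
  field_simp
  linear_combination (-r * x ^ 2) * hid

/-- Dominated convergence core: Gaussian-weighted averages converge. -/
lemma gauss_core {ι : Type*} (l : Filter ι) [l.IsCountablyGenerated]
    (f : ℝ → ℝ) (hf : Continuous f) (M : ℝ) (hM : ∀ y, |f y| ≤ M)
    (μ σ : ι → ℝ) (x : ℝ) (hμ : Tendsto μ l (nhds x)) (hσ : Tendsto σ l (nhds 0)) :
    Tendsto (fun t => ∫ u : ℝ, Real.exp (-(1/2) * u ^ 2) * f (μ t + σ t * u)) l
      (nhds (Real.sqrt (2 * Real.pi) * f x)) := by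
  have h2 : (∫ u : ℝ, Real.exp (-(1/2) * u ^ 2) * f x) = Real.sqrt (2 * Real.pi) * f x := by
    rw [MeasureTheory.integral_mul_const, integral_gaussian]
    have : Real.pi / (1/2 : ℝ) = 2 * Real.pi := by ring
    rw [this]
  rw [← h2]
  refine tendsto_integral_filter_of_dominated_convergence
    (fun u => Real.exp (-(1/2) * u ^ 2) * M) ?_ ?_ ?_ ?_
  · refine Eventually.of_forall fun t => Continuous.aestronglyMeasurable ?_
    exact (Real.continuous_exp.comp (by continuity)).mul
      (hf.comp (continuous_const.add (continuous_const.mul continuous_id)))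
  · refine Eventually.of_forall fun t => Eventually.of_forall fun u => ?_
    rw [Real.norm_eq_abs, abs_mul, abs_of_pos (Real.exp_pos _)]
    exact mul_le_mul_of_nonneg_left (hM _) (Real.exp_pos _).le
  · exact (integrable_exp_neg_mul_sq (by norm_num : (0:ℝ) < 1/2)).mul_const M
  · refine Eventually.of_forall fun u => ?_
    have h : Tendsto (fun t => μ t + σ t * u) l (nhds x) := by
      have := hμ.add (hσ.mul_const u)
      simpa using this
    exact tendsto_const_nhds.mul ((hf.tendsto x).comp h)

/-- Affine change of variables in a Gaussian integral. -/
lemma gauss_cov (f : ℝ → ℝ) (μ σ : ℝ) (hσ : 0 < σ) :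
    ∫ y : ℝ, Real.exp (-(1/2) * ((y - μ)/σ) ^ 2) * f y
      = σ * ∫ u : ℝ, Real.exp (-(1/2) * u ^ 2) * f (μ + σ * u) := by
  set g : ℝ → ℝ := fun y => Real.exp (-(1/2) * ((y - μ)/σ) ^ 2) * f y with hg
  have h1 : ∀ u : ℝ, Real.exp (-(1/2) * u ^ 2) * f (μ + σ * u) = g (μ + σ * u) := by
    intro u
    have h : (μ + σ * u - μ) / σ = u := by field_simp; ring
    show _ = Real.exp (-(1/2) * ((μ + σ * u - μ)/σ) ^ 2) * f (μ + σ * u)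
    rw [h]
  have h2 : (∫ u : ℝ, g (μ + σ * u)) = |σ⁻¹| • ∫ y : ℝ, g y := by
    rw [MeasureTheory.Measure.integral_comp_mul_left (fun v => g (μ + v)) σ,
      MeasureTheory.integral_add_left_eq_self (fun y => g y) μ]
  calc ∫ y : ℝ, g y = σ * (σ⁻¹ * ∫ y : ℝ, g y) := by
        field_simp
    _ = σ * ∫ u : ℝ, Real.exp (-(1/2) * u ^ 2) * f (μ + σ * u) := by
        rw [funext h1, h2, abs_of_pos (inv_pos.mpr hσ), smul_eq_mul]

/-- Decomposition of the Mehler kernel into prefactor × Gaussian. -/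
lemma mehler_decomp (lam τ x y : ℝ) (hlam : 0 < lam) (hτ : 0 < τ) :
    mehlerKernelτ lam τ x y =
      (lam ^ ((1:ℝ)/4) / Real.sqrt (2 * Real.pi * Real.sinh (2 * Real.sqrt lam * τ)) *
        Real.exp (-(Real.sqrt lam * Real.sinh (2 * Real.sqrt lam * τ) * x ^ 2 /
          (2 * Real.cosh (2 * Real.sqrt lam * τ))))) *
      Real.exp (-(1/2) * ((y - x / Real.cosh (2 * Real.sqrt lam * τ)) /
        Real.sqrt (Real.sinh (2 * Real.sqrt lam * τ) /
          (Real.sqrt lam * Real.cosh (2 * Real.sqrt lam * τ)))) ^ 2) := by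
  have hsl : 0 < Real.sqrt lam := Real.sqrt_pos.mpr hlam
  unfold mehlerKernelτ
  have hθpos : 0 < 2 * Real.sqrt lam * τ := by positivity
  have hs : 0 < Real.sinh (2 * Real.sqrt lam * τ) := Real.sinh_pos_iff.mpr hθpos
  have hc : 0 < Real.cosh (2 * Real.sqrt lam * τ) := Real.cosh_pos _
  have hσ2 : Real.sqrt (Real.sinh (2 * Real.sqrt lam * τ) /
        (Real.sqrt lam * Real.cosh (2 * Real.sqrt lam * τ))) ^ 2
      = Real.sinh (2 * Real.sqrt lam * τ) /
        (Real.sqrt lam * Real.cosh (2 * Real.sqrt lam * τ)) := Real.sq_sqrt (by positivity)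
  have hid : Real.cosh (2 * Real.sqrt lam * τ) ^ 2 - Real.sinh (2 * Real.sqrt lam * τ) ^ 2 = 1 :=
    Real.cosh_sq_sub_sinh_sq _
  rw [mul_assoc _ (Real.exp _) (Real.exp _), ← Real.exp_add]
  congr 2
  rw [div_pow, hσ2]
  exact mehler_exp_ident (Real.sqrt lam) _ _ x y hs hc hid

theorem mehlerKernel_tendsto_dirac (lam : ℝ) (hlam : 0 < lam)
    (f : ℝ → ℝ) (hf : Continuous f) (hbdd : ∃ M, ∀ y, |f y| ≤ M) (x : ℝ) :
    Tendsto (fun τ => ∫ y : ℝ, mehlerKernelτ lam τ x y * f y)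
      (nhdsWithin 0 (Set.Ioi 0)) (nhds (f x)) := by
  obtain ⟨M, hM⟩ := hbdd
  have hsl : 0 < Real.sqrt lam := Real.sqrt_pos.mpr hlam
  set l := nhdsWithin (0:ℝ) (Set.Ioi 0) with hl
  set s : ℝ → ℝ := fun τ => Real.sinh (2 * Real.sqrt lam * τ) with hsdef
  set c : ℝ → ℝ := fun τ => Real.cosh (2 * Real.sqrt lam * τ) with hcdef
  set μ : ℝ → ℝ := fun τ => x / c τ with hμdef
  set σ : ℝ → ℝ := fun τ => Real.sqrt (s τ / (Real.sqrt lam * c τ)) with hσdef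
  set A : ℝ → ℝ := fun τ => lam ^ ((1:ℝ)/4) / Real.sqrt (2 * Real.pi * s τ) *
      Real.exp (-(Real.sqrt lam * s τ * x ^ 2 / (2 * c τ))) with hAdef
  set G : ℝ → ℝ := fun τ => ∫ u : ℝ, Real.exp (-(1/2) * u ^ 2) * f (μ τ + σ τ * u) with hGdef
  -- limits of the building blocks
  have hθ : Tendsto (fun τ : ℝ => 2 * Real.sqrt lam * τ) l (nhds 0) := by
    have h : Tendsto (fun τ : ℝ => 2 * Real.sqrt lam * τ) (nhds 0)
        (nhds (2 * Real.sqrt lam * 0)) :=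
      Continuous.tendsto (by continuity) 0
    have h2 := h.mono_left (nhdsWithin_le_nhds (s := Set.Ioi (0:ℝ)))
    simpa using h2
  have hs0 : Tendsto s l (nhds 0) := by
    have := (Real.continuous_sinh.tendsto 0).comp hθ
    simpa [hsdef, Function.comp_def] using this
  have hc1 : Tendsto c l (nhds 1) := by
    have := (Real.continuous_cosh.tendsto 0).comp hθ
    simpa [hcdef, Function.comp_def] using this
  have hμx : Tendsto μ l (nhds x) := by
    have := (tendsto_const_nhds (x := x)).div hc1 one_ne_zero
    simpa [hμdef, Pi.div_def] using this
  have hσ0 : Tendsto σ l (nhds 0) := by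
    have h1 : Tendsto (fun τ => s τ / (Real.sqrt lam * c τ)) l (nhds 0) := by
      have := hs0.div (tendsto_const_nhds.mul hc1) (by simpa using hsl.ne')
      simpa [Pi.div_def] using this
    have := (Real.continuous_sqrt.tendsto 0).comp h1
    simpa [hσdef, Function.comp_def] using this
  -- key identity on Ioi 0
  have key : ∀ᶠ τ in l, (∫ y : ℝ, mehlerKernelτ lam τ x y * f y) = A τ * σ τ * G τ := by
    filter_upwards [self_mem_nhdsWithin] with τ hτ
    have hτ0 : 0 < τ := hτ
    have hsp : 0 < s τ := Real.sinh_pos_iff.mpr (by positivity)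
    have hcp : 0 < c τ := Real.cosh_pos _
    have hσp : 0 < σ τ := Real.sqrt_pos.mpr (by positivity)
    have heq : ∀ y : ℝ, mehlerKernelτ lam τ x y * f y
        = A τ * (Real.exp (-(1/2) * ((y - μ τ)/σ τ) ^ 2) * f y) := by
      intro y
      rw [mehler_decomp lam τ x y hlam hτ0]
      ring
    rw [funext heq, MeasureTheory.integral_const_mul, gauss_cov f (μ τ) (σ τ) hσp]
    ring
  -- limit of A * σ
  have hAσeq : ∀ᶠ τ in l, A τ * σ τ
      = Real.exp (-(Real.sqrt lam * s τ * x ^ 2 / (2 * c τ)))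
          / (Real.sqrt (2 * Real.pi) * Real.sqrt (c τ)) := by
    filter_upwards [self_mem_nhdsWithin] with τ hτ
    have hτ0 : (0:ℝ) < τ := hτ
    have hsp : 0 < s τ := Real.sinh_pos_iff.mpr (by positivity)
    have hcp : 0 < c τ := Real.cosh_pos _
    have h4 : Real.sqrt (Real.sqrt lam) = lam ^ ((1:ℝ)/4) := by
      rw [Real.sqrt_eq_rpow, Real.sqrt_eq_rpow, ← Real.rpow_mul hlam.le]
      norm_num
    have hσval : σ τ = Real.sqrt (s τ) / (lam ^ ((1:ℝ)/4) * Real.sqrt (c τ)) := by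
      show Real.sqrt (s τ / (Real.sqrt lam * c τ)) = _
      rw [Real.sqrt_div hsp.le, Real.sqrt_mul hsl.le, h4]
    have h2πs : Real.sqrt (2 * Real.pi * s τ) = Real.sqrt (2 * Real.pi) * Real.sqrt (s τ) := by
      rw [Real.sqrt_mul (by positivity)]
    have hAval : A τ = lam ^ ((1:ℝ)/4) / (Real.sqrt (2 * Real.pi) * Real.sqrt (s τ)) *
        Real.exp (-(Real.sqrt lam * s τ * x ^ 2 / (2 * c τ))) := by
      show lam ^ ((1:ℝ)/4) / Real.sqrt (2 * Real.pi * s τ) * _ = _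
      rw [h2πs]
    rw [hAval, hσval]
    have h1 : (0:ℝ) < lam ^ ((1:ℝ)/4) := Real.rpow_pos_of_pos hlam _
    have h2 : (0:ℝ) < Real.sqrt (s τ) := Real.sqrt_pos.mpr hsp
    have h3 : (0:ℝ) < Real.sqrt (c τ) := Real.sqrt_pos.mpr hcp
    have h5 : (0:ℝ) < Real.sqrt (2 * Real.pi) := Real.sqrt_pos.mpr (by positivity)
    field_simp
  have hAσ : Tendsto (fun τ => A τ * σ τ) l (nhds (Real.sqrt (2 * Real.pi))⁻¹) := by
    have hnum : Tendsto (fun τ => Real.exp (-(Real.sqrt lam * s τ * x ^ 2 / (2 * c τ)))) l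
        (nhds 1) := by
      have harg : Tendsto (fun τ => -(Real.sqrt lam * s τ * x ^ 2 / (2 * c τ))) l (nhds 0) := by
        have h := ((((tendsto_const_nhds (x := Real.sqrt lam)).mul hs0).mul_const (x ^ 2)).div
          (hc1.const_mul 2) (by norm_num)).neg
        simpa using h
      have := (Real.continuous_exp.tendsto 0).comp harg
      simpa [Function.comp_def] using this
    have hden : Tendsto (fun τ => Real.sqrt (2 * Real.pi) * Real.sqrt (c τ)) l
        (nhds (Real.sqrt (2 * Real.pi))) := by
      have := (tendsto_const_nhds (x := Real.sqrt (2 * Real.pi))).mul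
        ((Real.continuous_sqrt.tendsto 1).comp hc1)
      simpa using this
    have h5 : Real.sqrt (2 * Real.pi) ≠ 0 := (Real.sqrt_pos.mpr (by positivity)).ne'
    have h6 := hnum.div hden h5
    refine Tendsto.congr' (Filter.EventuallyEq.symm hAσeq) ?_
    simpa [one_div, Pi.div_def] using h6
  have hG : Tendsto G l (nhds (Real.sqrt (2 * Real.pi) * f x)) :=
    gauss_core l f hf M hM μ σ x hμx hσ0
  have hfin := hAσ.mul hG
  have h5 : Real.sqrt (2 * Real.pi) ≠ 0 := (Real.sqrt_pos.mpr (by positivity)).ne'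
  have h7 : (Real.sqrt (2 * Real.pi))⁻¹ * (Real.sqrt (2 * Real.pi) * f x) = f x := by
    field_simp
  rw [h7] at hfin
  exact Tendsto.congr' (Filter.EventuallyEq.symm key) hfin
end
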